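/- Let X₀ and X₁ be independent random variables, each uniformly distributed on [−2, 2], and set Ω₀ = arccos(X₀/2), Ω₁ = arccos(X₁/2). Then for every real x with x > 1, P(Ω₀/Ω₁ ≤ x) = (3 + cos(π/x))/4 + (1 + cos(π/x)) / (4·(x² − 1)). -/

import Mathlib

open Real Set MeasureTheory intervalIntegral ProbabilityTheory

lemma aux_arccos_le_iff {a t : ℝ} (ha : a ∈ Icc (-1:ℝ) 1) (ht0 : 0 ≤ t) (htπ : t ≤ π) :
    arccos a ≤ t ↔ cos t ≤ a := by
  constructor
  · intro h
    have := Real.cos_le_cos_of_nonneg_of_le_pi (arccos_nonneg a) htπ h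
    rwa [Real.cos_arccos ha.1 ha.2] at this
  · intro h
    have := (Real.strictAntiOn_arccos.le_iff_ge ha ⟨neg_one_le_cos t, cos_le_one t⟩).mpr h
    rwa [Real.arccos_cos ht0 htπ] at this

lemma aux_inner_meas {t : ℝ} (ht0 : 0 ≤ t) (htπ : t ≤ π) :
    ((4 : ENNReal)⁻¹ • volume.restrict (Icc (-2 : ℝ) 2)) {a | arccos (a/2) ≤ t}
      = ENNReal.ofReal ((1 - cos t)/2) := by
  have hms : MeasurableSet {a : ℝ | arccos (a/2) ≤ t} :=
    measurableSet_le (Real.continuous_arccos.measurable.comp (measurable_id.div_const 2))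
      measurable_const
  rw [Measure.smul_apply, Measure.restrict_apply hms]
  have hset : {a : ℝ | arccos (a/2) ≤ t} ∩ Icc (-2:ℝ) 2 = Icc (2 * cos t) 2 := by
    ext a
    simp only [mem_inter_iff, mem_setOf_eq, mem_Icc]
    constructor
    · rintro ⟨h1, h2, h3⟩
      have := (aux_arccos_le_iff ⟨by linarith, by linarith⟩ ht0 htπ).mp h1
      exact ⟨by linarith, h3⟩
    · rintro ⟨h1, h2⟩
      have hc : (-1:ℝ) ≤ cos t := neg_one_le_cos t
      exact ⟨(aux_arccos_le_iff ⟨by linarith, by linarith⟩ ht0 htπ).mpr (by linarith),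
        by linarith, h2⟩
  rw [hset, Real.volume_Icc, smul_eq_mul,
    show ((4:ENNReal))⁻¹ = ENNReal.ofReal (4⁻¹) by
      rw [ENNReal.ofReal_inv_of_pos (by norm_num)]; norm_num,
    ← ENNReal.ofReal_mul (by norm_num)]
  congr 1
  ring


-- antiderivative step: ∫ u in 0..π/x, sin u * (1 - cos (x*u)) = ...
lemma aux_J2 {x : ℝ} (hx : 1 < x) :
    ∫ u in (0:ℝ)..(π/x), sin u * (1 - cos (x*u))
      = (1 - cos (π/x)) + (1 + cos (π/x)) / (x^2 - 1) := by
  have hx1 : x + 1 ≠ 0 := by nlinarith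
  have hx2 : x - 1 ≠ 0 := by nlinarith
  have hx0 : x ≠ 0 := by nlinarith
  have hx3 : -1 + x^2 ≠ 0 := by nlinarith
  set H : ℝ → ℝ := fun u => -cos u + cos ((x+1)*u) / (2*(x+1)) - cos ((x-1)*u) / (2*(x-1)) with hH
  have hderiv : ∀ u ∈ uIcc (0:ℝ) (π/x), HasDerivAt H (sin u * (1 - cos (x*u))) u := by
    intro u _
    have h1 : HasDerivAt (fun u : ℝ => -cos u) (sin u) u := by
      exact (Real.hasDerivAt_cos u).neg.congr_deriv (neg_neg _)
    have h2 : HasDerivAt (fun u : ℝ => cos ((x+1)*u)) (-sin ((x+1)*u) * (x+1)) u := by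
      have := (Real.hasDerivAt_cos ((x+1)*u)).comp u ((hasDerivAt_id u).const_mul (x+1))
      exact this.congr_deriv (by ring)
    have h3 : HasDerivAt (fun u : ℝ => cos ((x-1)*u)) (-sin ((x-1)*u) * (x-1)) u := by
      have := (Real.hasDerivAt_cos ((x-1)*u)).comp u ((hasDerivAt_id u).const_mul (x-1))
      exact this.congr_deriv (by ring)
    have := (h1.add (h2.div_const (2*(x+1)))).sub (h3.div_const (2*(x-1)))
    refine this.congr_deriv ?_
    rw [show (x+1)*u = x*u+u by ring, show (x-1)*u = x*u-u by ring, Real.sin_add, Real.sin_sub]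
    field_simp
    ring
  have hint : IntervalIntegrable (fun u : ℝ => sin u * (1 - cos (x*u))) volume 0 (π/x) :=
    Continuous.intervalIntegrable (by fun_prop) 0 (π/x)
  rw [integral_eq_sub_of_hasDerivAt hderiv hint]
  have e1 : (x+1) * (π/x) = π + π/x := by field_simp
  have e2 : (x-1) * (π/x) = π - π/x := by field_simp
  simp only [hH, e1, e2, mul_zero, Real.cos_zero, Real.cos_pi_sub, Real.cos_add, Real.cos_pi,
    Real.sin_pi]
  field_simp
  ring_nf
  field_simp [hx3]
  ring

-- substitution step
lemma aux_J {x : ℝ} (hx : 1 < x) :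
    ∫ b in (2*cos (π/x))..2, (1 - cos (x * arccos (b/2)))/2
      = (1 - cos (π/x)) + (1 + cos (π/x)) / (x^2 - 1) := by
  have hx0 : 0 < x := by linarith
  have hπx0 : 0 ≤ π / x := by positivity
  have hπxπ : π / x ≤ π := by
    rw [div_le_iff₀ hx0]; nlinarith [pi_pos]
  have hsub : ∫ b in (2*cos (π/x))..((2:ℝ)*cos 0), (1 - cos (x * arccos (b/2)))/2
      = ∫ u in (π/x)..(0:ℝ), (-2 * sin u) * ((1 - cos (x * arccos ((2*cos u)/2)))/2) := by
    have h := integral_comp_smul_deriv (f := fun u : ℝ => 2 * cos u)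
      (f' := fun u : ℝ => -2 * sin u) (g := fun b : ℝ => (1 - cos (x * arccos (b/2)))/2)
      (a := π/x) (b := 0)
      (fun u _ => by simpa using ((Real.hasDerivAt_cos u).const_mul 2))
      (by fun_prop)
      ((continuous_const.sub (Real.continuous_cos.comp (continuous_const.mul
        (Real.continuous_arccos.comp (continuous_id.div_const 2))))).div_const 2)
    rw [← h]
    simp [smul_eq_mul]
  rw [Real.cos_zero, mul_one] at hsub
  rw [hsub, intervalIntegral.integral_symm]
  have hcong : ∫ u in (0:ℝ)..(π/x), (-2 * sin u) * ((1 - cos (x * arccos ((2*cos u)/2)))/2)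
      = ∫ u in (0:ℝ)..(π/x), -(sin u * (1 - cos (x*u))) := by
    apply intervalIntegral.integral_congr
    intro u hu
    rw [uIcc_of_le hπx0] at hu
    show -2 * sin u * ((1 - cos (x * arccos ((2*cos u)/2)))/2) = -(sin u * (1 - cos (x*u)))
    have h2 : (2 * cos u) / 2 = cos u := by ring
    rw [h2, Real.arccos_cos hu.1 (hu.2.trans hπxπ)]
    ring
  rw [hcong, intervalIntegral.integral_neg, neg_neg, aux_J2 hx]


/-- CDF of the ratio `Ω₀ / Ω₁` of arccosines of independent uniforms on `[-2,2]`,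
for arguments greater than 1. -/
theorem cdf_ratio_gt_one
    {Ω : Type*} [MeasureSpace Ω] [IsProbabilityMeasure (ℙ : Measure Ω)]
    (X₀ X₁ : Ω → ℝ) (hX₀ : Measurable X₀) (hX₁ : Measurable X₁)
    (hindep : IndepFun X₀ X₁ ℙ)
    (hU₀ : Measure.map X₀ ℙ = (4 : ENNReal)⁻¹ • volume.restrict (Set.Icc (-2 : ℝ) 2))
    (hU₁ : Measure.map X₁ ℙ = (4 : ENNReal)⁻¹ • volume.restrict (Set.Icc (-2 : ℝ) 2))
    (x : ℝ) (hx : 1 < x) :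
    ℙ {ω | Real.arccos (X₀ ω / 2) / Real.arccos (X₁ ω / 2) ≤ x}
      = ENNReal.ofReal ((3 + Real.cos (Real.pi / x)) / 4 + (1 + Real.cos (Real.pi / x)) / (4 * (x ^ 2 - 1))) := by

  set μ : Measure ℝ := (4 : ENNReal)⁻¹ • volume.restrict (Set.Icc (-2 : ℝ) 2) with hμ
  haveI : IsProbabilityMeasure μ := hU₀ ▸ Measure.isProbabilityMeasure_map hX₀.aemeasurable
  set S : Set (ℝ × ℝ) := {p : ℝ × ℝ | arccos (p.1/2) / arccos (p.2/2) ≤ x} with hSdef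
  have hS : MeasurableSet S := by
    apply measurableSet_le _ measurable_const
    exact (Real.continuous_arccos.measurable.comp (measurable_fst.div_const 2)).div
      (Real.continuous_arccos.measurable.comp (measurable_snd.div_const 2))
  have hmap : Measure.map (fun ω => (X₀ ω, X₁ ω)) ℙ = μ.prod μ := by
    have h := (indepFun_iff_map_prod_eq_prod_map_map hX₀.aemeasurable hX₁.aemeasurable).mp hindep
    rw [hU₀, hU₁] at h
    exact h
  have h1 : ℙ {ω | arccos (X₀ ω / 2) / arccos (X₁ ω / 2) ≤ x} = (μ.prod μ) S := by
    rw [← hmap, Measure.map_apply (hX₀.prodMk hX₁) hS]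
    rfl
  rw [h1, Measure.prod_apply_symm hS]
  -- basic facts
  have hx0 : (0:ℝ) < x := by linarith
  have hπx0 : 0 < π / x := div_pos pi_pos hx0
  have hπxπ : π / x < π := by
    rw [div_lt_iff₀ hx0]; nlinarith [pi_pos]
  set c : ℝ := cos (π / x) with hcdef
  have hc1 : c < 1 := by
    have := Real.strictAntiOn_cos ⟨le_refl 0, pi_pos.le⟩ ⟨hπx0.le, hπxπ.le⟩ hπx0
    simpa using this
  have hc2 : -1 < c := by
    have := Real.strictAntiOn_cos ⟨hπx0.le, hπxπ.le⟩ ⟨pi_pos.le, le_refl π⟩ hπxπ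
    simpa using this
  have hx21 : (0:ℝ) < x^2 - 1 := by nlinarith
  -- slice values
  have hslice1 : ∀ b ∈ Ico (-2:ℝ) (2*c), μ ((fun a => (a, b)) ⁻¹' S) = 1 := by
    intro b hb
    have hb2 : b / 2 < c := by
      have := hb.2; linarith
    have harc : π / x < arccos (b/2) := by
      have h := Real.strictAntiOn_arccos ⟨by linarith [hb.1], by linarith⟩
        ⟨hc2.le, hc1.le⟩ hb2
      rwa [hcdef, Real.arccos_cos hπx0.le hπxπ.le] at h
    have hpos : 0 < arccos (b/2) := lt_trans hπx0 harc
    have huniv : ((fun a => (a, b)) ⁻¹' S) = univ := by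
      ext a
      simp only [hSdef, mem_preimage, mem_setOf_eq, mem_univ, iff_true]
      rw [div_le_iff₀ hpos]
      have h1 : arccos (a/2) ≤ π := Real.arccos_le_pi _
      have h2 : π < x * arccos (b/2) := by
        calc π = x * (π / x) := by field_simp
        _ < x * arccos (b/2) := by exact (mul_lt_mul_iff_right₀ hx0).mpr harc
      linarith
    rw [huniv, measure_univ]
  have hslice2 : ∀ b ∈ Ico (2*c) (2:ℝ),
      μ ((fun a => (a, b)) ⁻¹' S) = ENNReal.ofReal ((1 - cos (x * arccos (b/2)))/2) := by
    intro b hb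
    have hbpos : 0 < arccos (b/2) := Real.arccos_pos.mpr (by linarith [hb.2])
    have harc : arccos (b/2) ≤ π / x := by
      refine (aux_arccos_le_iff ⟨?_, ?_⟩ hπx0.le hπxπ.le).mpr ?_
      · linarith [hb.1]
      · linarith [hb.2]
      · rw [← hcdef]; linarith [hb.1]
    have ht0 : 0 ≤ x * arccos (b/2) := mul_nonneg hx0.le (Real.arccos_nonneg _)
    have htπ : x * arccos (b/2) ≤ π := by
      calc x * arccos (b/2) ≤ x * (π / x) := by
            exact (mul_le_mul_iff_right₀ hx0).mpr harc
        _ = π := by field_simp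
    have hset : ((fun a => (a, b)) ⁻¹' S) = {a | arccos (a/2) ≤ x * arccos (b/2)} := by
      ext a
      simp only [hSdef, mem_preimage, mem_setOf_eq]
      rw [div_le_iff₀ hbpos]
    rw [hset, hμ]
    exact aux_inner_meas ht0 htπ
  -- outer integral
  have hb₀1 : (-2:ℝ) ≤ 2*c := by linarith
  have hb₀2 : (2:ℝ)*c ≤ 2 := by linarith
  rw [hμ, lintegral_smul_measure]
  have hrestrict : ∫⁻ b, μ ((fun a => (a, b)) ⁻¹' S) ∂(volume.restrict (Icc (-2:ℝ) 2))
      = (∫⁻ b in Ico (-2:ℝ) (2*c), μ ((fun a => (a, b)) ⁻¹' S))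
        + ∫⁻ b in Ico (2*c) (2:ℝ), μ ((fun a => (a, b)) ⁻¹' S) := by
    rw [← lintegral_union measurableSet_Ico (Ico_disjoint_Ico_same),
      Ico_union_Ico_eq_Ico hb₀1 hb₀2]
    exact setLIntegral_congr Ico_ae_eq_Icc.symm
  rw [hrestrict]
  have hp1 : ∫⁻ b in Ico (-2:ℝ) (2*c), μ ((fun a => (a, b)) ⁻¹' S)
      = ENNReal.ofReal (2*c + 2) := by
    rw [setLIntegral_congr_fun measurableSet_Ico hslice1, setLIntegral_one,
      Real.volume_Ico]
    congr 1; ring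
  have hcont : Continuous fun b : ℝ => (1 - cos (x * arccos (b/2)))/2 :=
    (continuous_const.sub (Real.continuous_cos.comp (continuous_const.mul
      (Real.continuous_arccos.comp (continuous_id.div_const 2))))).div_const 2
  have hp2 : ∫⁻ b in Ico (2*c) (2:ℝ), μ ((fun a => (a, b)) ⁻¹' S)
      = ENNReal.ofReal ((1 - c) + (1 + c) / (x^2 - 1)) := by
    rw [setLIntegral_congr_fun measurableSet_Ico hslice2]
    rw [← ofReal_integral_eq_lintegral_ofReal
      ((hcont.integrableOn_Icc).mono_set Ico_subset_Icc_self)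
      (ae_of_all _ (fun b => by
        show (0:ℝ) ≤ (1 - cos (x * arccos (b/2)))/2
        have := Real.cos_le_one (x * arccos (b/2)); linarith))]
    rw [setIntegral_congr_set Ico_ae_eq_Icc, integral_Icc_eq_integral_Ioc,
      ← intervalIntegral.integral_of_le hb₀2, aux_J hx]
  rw [hp1, hp2, ← ENNReal.ofReal_add (by linarith)
      (by
        have h := div_nonneg (by linarith : (0:ℝ) ≤ 1 + c) (by linarith : (0:ℝ) ≤ x^2 - 1)
        linarith),
    show ((4:ENNReal))⁻¹ = ENNReal.ofReal (4⁻¹) by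
      rw [ENNReal.ofReal_inv_of_pos (by norm_num)]; norm_num,
    smul_eq_mul, ← ENNReal.ofReal_mul (by norm_num)]
  congr 1
  have hne : x^2 - 1 ≠ 0 := ne_of_gt hx21
  field_simp
  ring
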